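/- For every propositional formula F over 𝒫 and every weight w (a real number or α), the one-rule LP^MLN program {0 : F} is strongly equivalent to the one-rule LP^MLN program {w : F ∨ ¬F}. -/

import Mathlib

namespace LPMLN

/-- Propositional formulas over a set of atoms `P`, built from atoms and `⊥`
using `∧`, `∨`, `→`. -/
inductive Formula (P : Type) : Type where
  | atom : P → Formula P
  | bot  : Formula P
  | and  : Formula P → Formula P → Formula P
  | or   : Formula P → Formula P → Formula P
  | imp  : Formula P → Formula P → Formula P
deriving DecidableEq

variable {P : Type} [DecidableEq P]

/-- `¬F` abbreviates `F → ⊥`. -/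
def Formula.neg (F : Formula P) : Formula P := .imp F .bot

/-- Classical evaluation of a formula in an interpretation `X ⊆ P`. -/
def Formula.eval (X : Finset P) : Formula P → Bool
  | .atom p => decide (p ∈ X)
  | .bot => false
  | .and F G => F.eval X && G.eval X
  | .or F G => F.eval X || G.eval X
  | .imp F G => !(F.eval X) || G.eval X

/-- Classical satisfaction `X ⊨ F`. -/
def Formula.sat (X : Finset P) (F : Formula P) : Prop := F.eval X = true

/-- The reduct `F^X`: every maximal subformula not satisfied by `X` is replaced by `⊥`. -/
def Formula.reduct (X : Finset P) : Formula P → Formula P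
  | .atom p => if p ∈ X then .atom p else .bot
  | .bot => .bot
  | .and F G => if (Formula.and F G).eval X then .and (F.reduct X) (G.reduct X) else .bot
  | .or F G => if (Formula.or F G).eval X then .or (F.reduct X) (G.reduct X) else .bot
  | .imp F G => if (Formula.imp F G).eval X then .imp (F.reduct X) (G.reduct X) else .bot

/-- `X` satisfies a (finite) set of formulas. -/
def satSet (X : Finset P) (Γ : Finset (Formula P)) : Prop := ∀ F ∈ Γ, F.sat X

/-- The reduct `Γ^X` of a finite set of formulas. -/
def reductSet (X : Finset P) (Γ : Finset (Formula P)) : Finset (Formula P) :=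
  Γ.image (Formula.reduct X)

/-- `X` is a stable model of `Γ` if `X ⊨ Γ^X` and no proper subset of `X` satisfies `Γ^X`. -/
def StableModel (Γ : Finset (Formula P)) (X : Finset P) : Prop :=
  satSet X (reductSet X Γ) ∧ ∀ Y, Y ⊂ X → ¬ satSet Y (reductSet X Γ)

/-- A weight is a real number (soft) or the symbol `α` (hard). -/
inductive Weight : Type where
  | soft : ℝ → Weight
  | hard : Weight

noncomputable instance : DecidableEq Weight := Classical.decEq _

/-- An LP^MLN program: a finite set of weighted formulas `w : R`. -/
abbrev Program (P : Type) [DecidableEq P] := Finset (Weight × Formula P)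

/-- `𝔽_X`: the weighted formulas of `𝔽` whose formula is satisfied by `X`. -/
noncomputable def progSat (𝔽 : Program P) (X : Finset P) : Program P :=
  𝔽.filter (fun r => r.2.eval X = true)

/-- `𝔽̄`: the formulas of `𝔽`, with weights dropped. -/
noncomputable def formulas (𝔽 : Program P) : Finset (Formula P) := 𝔽.image Prod.snd

/-- `X` is a soft stable model of `𝔽` (i.e. `X ∈ SM[𝔽]`) if `X` is a stable model of `𝔽̄_X`. -/
def SoftStable (𝔽 : Program P) (X : Finset P) : Prop :=
  StableModel (formulas (progSat 𝔽 X)) X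

/-- w-expressions: either zero or a formal expression `e^{c₁ + c₂·α}` with `c₁ : ℝ`, `c₂ : ℤ`. -/
inductive WExpr : Type where
  | zero : WExpr
  | exp : ℝ → ℤ → WExpr

/-- Multiplication of w-expressions: add exponents componentwise; zero is absorbing. -/
def WExpr.mul : WExpr → WExpr → WExpr
  | .zero, _ => .zero
  | _, .zero => .zero
  | .exp a b, .exp c d => .exp (a + c) (b + d)

/-- Inverse of a w-expression: negate both exponents. -/
def WExpr.inv : WExpr → WExpr
  | .zero => .zero
  | .exp a b => .exp (-a) (-b)

/-- Evaluation of a w-expression at a real number `a`. -/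
noncomputable def WExpr.eval (a : ℝ) : WExpr → ℝ
  | .zero => 0
  | .exp c₁ c₂ => Real.exp (c₁ + c₂ * a)

/-- The real contribution of a weight (hard rules contribute `0` to the soft sum). -/
def softWeight : Weight → ℝ
  | .soft r => r
  | .hard => 0

/-- Sum of the weights of the soft rules of `𝔽`. -/
noncomputable def softSum (𝔽 : Program P) : ℝ := ∑ r ∈ 𝔽, softWeight r.1

/-- The number of hard rules of `𝔽`. -/
noncomputable def hardCount (𝔽 : Program P) : ℤ :=
  ((𝔽.filter (fun r => r.1 = Weight.hard)).card : ℤ)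

/-- `TW(𝔽) = e^{c₁ + c₂·α}` where `c₁` is the sum of the soft weights and
`c₂` the number of hard rules. -/
noncomputable def TW (𝔽 : Program P) : WExpr := .exp (softSum 𝔽) (hardCount 𝔽)

open Classical in
/-- `W_𝔽(X) = TW(𝔽_X)` if `X ∈ SM[𝔽]`, and zero otherwise. -/
noncomputable def W (𝔽 : Program P) (X : Finset P) : WExpr :=
  if SoftStable 𝔽 X then TW (progSat 𝔽 X) else .zero

open Classical in
/-- `W^pnt_𝔽(X) = TW(𝔽 \ 𝔽_X)⁻¹` if `X ∈ SM[𝔽]`, and zero otherwise. -/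
noncomputable def Wpnt (𝔽 : Program P) (X : Finset P) : WExpr :=
  if SoftStable 𝔽 X then (TW (𝔽 \ progSat 𝔽 X)).inv else .zero

/-- `P_𝔽(X)`: the limit as `a → ∞` of the normalized evaluation of `W_𝔽(X)`. -/
noncomputable def Pr [Fintype P] (𝔽 : Program P) (X : Finset P) : ℝ :=
  Filter.limUnder Filter.atTop
    (fun a : ℝ => (W 𝔽 X).eval a / ∑ Y : Finset P, (W 𝔽 Y).eval a)

/-- `P^pnt_𝔽(X)`: the limit as `a → ∞` of the normalized evaluation of `W^pnt_𝔽(X)`. -/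
noncomputable def PrPnt [Fintype P] (𝔽 : Program P) (X : Finset P) : ℝ :=
  Filter.limUnder Filter.atTop
    (fun a : ℝ => (Wpnt 𝔽 X).eval a / ∑ Y : Finset P, (Wpnt 𝔽 Y).eval a)

/-- Weak equivalence: the same probability distribution. -/
def WeakEquiv [Fintype P] (𝔽 𝔾 : Program P) : Prop :=
  ∀ X : Finset P, Pr 𝔽 X = Pr 𝔾 X

/-- Strong equivalence of LP^MLN programs. -/
def StrongEquiv [Fintype P] (𝔽 𝔾 : Program P) : Prop :=
  ∀ (ℍ : Program P) (X : Finset P), Pr (𝔽 ∪ ℍ) X = Pr (𝔾 ∪ ℍ) X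

/-- Structural equivalence of LP^MLN programs. -/
def StructEquiv (𝔽 𝔾 : Program P) : Prop :=
  ∀ (ℍ : Program P) (X : Finset P), SoftStable (𝔽 ∪ ℍ) X ↔ SoftStable (𝔾 ∪ ℍ) X

/-- HT satisfaction `⟨Y,X⟩ ⊨ₕₜ F` (at the world "here"). -/
def htSat (Y X : Finset P) : Formula P → Prop
  | .atom p => p ∈ Y
  | .bot => False
  | .and F G => htSat Y X F ∧ htSat Y X G
  | .or F G => htSat Y X F ∨ htSat Y X G
  | .imp F G => (htSat Y X F → htSat Y X G) ∧ (Formula.imp F G).sat X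

/-- `⟨Y,X⟩` is an HT model of a set `Γ` of formulas. -/
def HTModel (Γ : Finset (Formula P)) (Y X : Finset P) : Prop :=
  Y ⊆ X ∧ ∀ F ∈ Γ, htSat Y X F

/-- `⟨Y,X⟩` is a soft HT model of an LP^MLN program `𝔽`. -/
def SoftHT (𝔽 : Program P) (Y X : Finset P) : Prop :=
  Y ⊆ X ∧ ∀ r ∈ progSat 𝔽 X, htSat Y X r.2

/-- The choice formula `{F}^ch = F ∨ ¬F`. -/
def Formula.ch (F : Formula P) : Formula P := .or F F.neg

/-- `{Γ}^ch`, choice formulas of a set of formulas. -/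
def chSet (Γ : Finset (Formula P)) : Finset (Formula P) := Γ.image Formula.ch

/-- Renaming of atoms. -/
def Formula.rename {Q : Type} (f : P → Q) : Formula P → Formula Q
  | .atom p => .atom (f p)
  | .bot => .bot
  | .and F G => .and (F.rename f) (G.rename f)
  | .or F G => .or (F.rename f) (G.rename f)
  | .imp F G => .imp (F.rename f) (G.rename f)

/-- `Δ_{𝒫'}(F)`, a formula over `𝒫 ∪ 𝒫'`; unprimed atoms are `Sum.inl p`,
primed atoms `p'` are `Sum.inr p`. -/
def Formula.delta : Formula P → Formula (P ⊕ P)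
  | .atom p => .atom (Sum.inr p)
  | .bot => .bot
  | .and F G => .and F.delta G.delta
  | .or F G => .or F.delta G.delta
  | .imp F G => .and (.imp F.delta G.delta)
      (.imp (F.rename Sum.inl) (G.rename Sum.inl))

/-- `Δ_{𝒫'}(Γ)` for a set of formulas. -/
def deltaSet (Γ : Finset (Formula P)) : Finset (Formula (P ⊕ P)) :=
  Γ.image Formula.delta

/-- The interpretation `Y' ∪ X` of `𝒫 ∪ 𝒫'`. -/
def primedInterp (Y X : Finset P) : Finset (P ⊕ P) :=
  X.image Sum.inl ∪ Y.image Sum.inr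


lemma eval_false_reduct {F : Formula P} {X : Finset P} (h : F.eval X = false) :
    F.reduct X = .bot := by
  cases F <;> simp_all [Formula.reduct, Formula.eval]

lemma eval_ch (F : Formula P) (X : Finset P) : F.ch.eval X = true := by
  simp [Formula.ch, Formula.neg, Formula.eval]

lemma sat_ch_reduct (F : Formula P) (X Y : Finset P) :
    (F.ch.reduct X).sat Y ↔ (F.eval X = true → (F.reduct X).sat Y) := by
  have h := eval_ch F X
  cases hF : F.eval X with
  | false =>
      have h1 : F.reduct X = .bot := eval_false_reduct hF
      have h2 : (F.neg).reduct X = Formula.imp .bot .bot := by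
        simp [Formula.neg, Formula.reduct, Formula.eval, hF, h1]
      have h3 : (F.neg).eval X = true := by simp [Formula.neg, Formula.eval, hF]
      simp [Formula.ch, Formula.reduct, h, Formula.eval, Formula.sat, hF, h1, h2, h3]
  | true =>
      have h2 : (F.neg).reduct X = .bot := by
        apply eval_false_reduct; simp [Formula.neg, Formula.eval, hF]
      simp [Formula.ch, Formula.reduct, h, h2, Formula.eval, Formula.sat, hF]

lemma satSet_reductSet {X Y : Finset P} {Γ : Finset (Formula P)} :
    satSet Y (reductSet X Γ) ↔ ∀ G ∈ Γ, (G.reduct X).sat Y := by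
  simp [satSet, reductSet]

lemma progSat_union (𝔽 ℍ : Program P) (X : Finset P) :
    progSat (𝔽 ∪ ℍ) X = progSat 𝔽 X ∪ progSat ℍ X := Finset.filter_union _ _ _

lemma progSat_singleton (r : Weight × Formula P) (X : Finset P) :
    progSat ({r} : Program P) X = if r.2.eval X = true then {r} else ∅ :=
  Finset.filter_singleton _ _

lemma key_sat (F : Formula P) (w : Weight) (ℍ : Program P) (X Y : Finset P) :
    (satSet Y (reductSet X (formulas (progSat (({(Weight.soft 0, F)} : Program P) ∪ ℍ) X))) ↔
      satSet Y (reductSet X (formulas (progSat (({(w, F.ch)} : Program P) ∪ ℍ) X)))) := by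
  rw [satSet_reductSet, satSet_reductSet]
  have hmemF : ∀ G, G ∈ formulas (progSat (({(Weight.soft 0, F)} : Program P) ∪ ℍ) X) ↔
      (F.eval X = true ∧ G = F) ∨ G ∈ formulas (progSat ℍ X) := by
    intro G
    rw [progSat_union, progSat_singleton]
    by_cases hF : F.eval X = true <;>
      simp [formulas, hF, Finset.mem_union, eq_comm]
  have hmemG : ∀ G, G ∈ formulas (progSat (({(w, F.ch)} : Program P) ∪ ℍ) X) ↔
      G = F.ch ∨ G ∈ formulas (progSat ℍ X) := by
    intro G
    rw [progSat_union, progSat_singleton]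
    simp [formulas, eval_ch, Finset.mem_union, eq_comm]
  constructor
  · intro hall G hG
    rw [hmemG] at hG
    rcases hG with rfl | hG
    · rw [sat_ch_reduct]
      intro hF
      exact hall F ((hmemF F).2 (.inl ⟨hF, rfl⟩))
    · exact hall G ((hmemF G).2 (.inr hG))
  · intro hall G hG
    rw [hmemF] at hG
    rcases hG with ⟨hF, rfl⟩ | hG
    · exact (sat_ch_reduct G X Y).1 (hall G.ch ((hmemG _).2 (.inl rfl))) hF
    · exact hall G ((hmemG G).2 (.inr hG))

lemma key_stable (F : Formula P) (w : Weight) (ℍ : Program P) (X : Finset P) :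
    SoftStable (({(Weight.soft 0, F)} : Program P) ∪ ℍ) X ↔
      SoftStable (({(w, F.ch)} : Program P) ∪ ℍ) X := by
  unfold SoftStable StableModel
  constructor
  · rintro ⟨h1, h2⟩
    exact ⟨(key_sat F w ℍ X X).1 h1, fun Y hY hs => h2 Y hY ((key_sat F w ℍ X Y).2 hs)⟩
  · rintro ⟨h1, h2⟩
    exact ⟨(key_sat F w ℍ X X).2 h1, fun Y hY hs => h2 Y hY ((key_sat F w ℍ X Y).1 hs)⟩

lemma softSum_F (F : Formula P) (ℍ : Program P) (X : Finset P) :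
    softSum (progSat (({(Weight.soft 0, F)} : Program P) ∪ ℍ) X) = softSum (progSat ℍ X) := by
  rw [progSat_union, progSat_singleton]
  by_cases hF : F.eval X = true
  · simp only [hF, if_pos]
    rw [← Finset.insert_eq, softSum]
    rw [Finset.sum_insert_of_eq_zero_if_notMem (fun (_ : (Weight.soft 0, F) ∉ progSat ℍ X) => (rfl : softWeight (Weight.soft 0) = 0))]
    rfl
  · simp [hF, softSum]

lemma hardCount_F (F : Formula P) (ℍ : Program P) (X : Finset P) :
    hardCount (progSat (({(Weight.soft 0, F)} : Program P) ∪ ℍ) X) = hardCount (progSat ℍ X) := by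
  rw [progSat_union, progSat_singleton]
  by_cases hF : F.eval X = true
  · simp only [hF, if_pos]
    rw [← Finset.insert_eq, hardCount, Finset.filter_insert]
    rw [if_neg (by simp)]
    rfl
  · simp [hF, hardCount]

lemma mem_progSat_ch (F : Formula P) (w : Weight) (ℍ : Program P) (X : Finset P) :
    (w, F.ch) ∈ progSat ℍ X ↔ (w, F.ch) ∈ ℍ := by
  simp [progSat, eval_ch]

open Classical in
lemma softSum_G (F : Formula P) (w : Weight) (ℍ : Program P) (X : Finset P) :
    softSum (progSat (({(w, F.ch)} : Program P) ∪ ℍ) X) =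
      (if (w, F.ch) ∈ ℍ then 0 else softWeight w) + softSum (progSat ℍ X) := by
  rw [progSat_union, progSat_singleton, if_pos (eval_ch F X), ← Finset.insert_eq]
  by_cases hmem : (w, F.ch) ∈ ℍ
  · rw [Finset.insert_eq_self.2 ((mem_progSat_ch F w ℍ X).2 hmem), if_pos hmem, zero_add]
  · rw [if_neg hmem, softSum,
      Finset.sum_insert (fun h => hmem ((mem_progSat_ch F w ℍ X).1 h))]
    rfl

open Classical in
lemma hardCount_G (F : Formula P) (w : Weight) (ℍ : Program P) (X : Finset P) :
    hardCount (progSat (({(w, F.ch)} : Program P) ∪ ℍ) X) =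
      (if (w, F.ch) ∈ ℍ then 0 else if w = Weight.hard then 1 else 0) +
        hardCount (progSat ℍ X) := by
  rw [progSat_union, progSat_singleton, if_pos (eval_ch F X), ← Finset.insert_eq]
  by_cases hmem : (w, F.ch) ∈ ℍ
  · rw [Finset.insert_eq_self.2 ((mem_progSat_ch F w ℍ X).2 hmem), if_pos hmem, zero_add]
  · rw [if_neg hmem, hardCount, Finset.filter_insert]
    by_cases hw : w = Weight.hard
    · rw [if_pos hw, if_pos hw,
        Finset.card_insert_of_notMem
          (fun h => hmem ((mem_progSat_ch F w ℍ X).1 (Finset.mem_of_mem_filter _ h)))]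
      push_cast
      ring_nf
      rfl
    · rw [if_neg hw, if_neg hw, zero_add]
      rfl

open Classical in
lemma W_rel (F : Formula P) (w : Weight) (ℍ : Program P) (X : Finset P) (a : ℝ) :
    (W (({(w, F.ch)} : Program P) ∪ ℍ) X).eval a =
      Real.exp ((if (w, F.ch) ∈ ℍ then 0 else softWeight w) +
        (((if (w, F.ch) ∈ ℍ then 0 else if w = Weight.hard then 1 else 0 : ℤ) : ℝ)) * a) *
      (W (({(Weight.soft 0, F)} : Program P) ∪ ℍ) X).eval a := by
  unfold W
  by_cases hs : SoftStable (({(Weight.soft 0, F)} : Program P) ∪ ℍ) X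
  · rw [if_pos hs, if_pos ((key_stable F w ℍ X).1 hs)]
    simp only [TW, WExpr.eval]
    rw [softSum_G, hardCount_G, softSum_F, hardCount_F, ← Real.exp_add]
    congr 1
    push_cast
    ring
  · rw [if_neg hs, if_neg (fun h => hs ((key_stable F w ℍ X).2 h))]
    simp [WExpr.eval]

/-- `{0 : F}` is strongly equivalent to `{w : F ∨ ¬F}` for any weight `w`. -/
theorem stmt7 {P : Type} [DecidableEq P] [Fintype P] (F : Formula P) (w : Weight) :
    StrongEquiv ({(Weight.soft 0, F)} : Program P) ({(w, F.ch)} : Program P) := by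
  intro ℍ X
  unfold Pr
  have hfun : (fun a : ℝ => (W (({(Weight.soft 0, F)} : Program P) ∪ ℍ) X).eval a /
      ∑ Y : Finset P, (W (({(Weight.soft 0, F)} : Program P) ∪ ℍ) Y).eval a) =
    (fun a : ℝ => (W (({(w, F.ch)} : Program P) ∪ ℍ) X).eval a /
      ∑ Y : Finset P, (W (({(w, F.ch)} : Program P) ∪ ℍ) Y).eval a) := by
    funext a
    have hden : ∑ Y : Finset P, (W (({(w, F.ch)} : Program P) ∪ ℍ) Y).eval a
        = Real.exp ((if (w, F.ch) ∈ ℍ then 0 else softWeight w) +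
            (((if (w, F.ch) ∈ ℍ then 0 else if w = Weight.hard then 1 else 0 : ℤ) : ℝ)) * a) *
          ∑ Y : Finset P, (W (({(Weight.soft 0, F)} : Program P) ∪ ℍ) Y).eval a := by
      rw [Finset.mul_sum]
      exact Finset.sum_congr rfl fun Y _ => W_rel F w ℍ Y a
    rw [hden, W_rel F w ℍ X a, mul_div_mul_left _ _ (Real.exp_ne_zero _)]
  rw [hfun]

end LPMLN
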